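/- Let G, H₁, H₂ be torsion-free finitely Butler abelian groups such that G is divisible, and let g₁ : G → H₁ and g₂ : G → H₂ be pure embeddings. Then there exist a torsion-free finitely Butler abelian group H and pure embeddings f₁ : H₁ → H and f₂ : H₂ → H such that f₁ ∘ g₁ = f₂ ∘ g₂. -/

import Mathlib

/-- `H` is a pure subgroup: `nG ∩ H = nH` for every `n : ℕ`. -/
def AddSubgroup.IsPure {G : Type*} [AddCommGroup G] (H : AddSubgroup G) : Prop :=
  ∀ (n : ℕ), ∀ h ∈ H, (∃ g : G, n • g = h) → ∃ h' ∈ H, n • h' = h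

/-- A Butler group: a torsion-free abelian group of finite rank admitting a pure embedding
into a finite direct sum of rank-one torsion-free groups (nonzero subgroups of `ℚ`). -/
def IsButler (B : Type*) [AddCommGroup B] : Prop :=
  NoZeroSMulDivisors ℤ B ∧ Module.rank ℤ B < Cardinal.aleph0 ∧
    ∃ (k : ℕ) (A : Fin k → AddSubgroup ℚ), (∀ i, A i ≠ ⊥) ∧
      ∃ f : B →+ (∀ i : Fin k, ↥(A i)), Function.Injective f ∧ f.range.IsPure

/-- A torsion-free finitely Butler (B₀-) group: a torsion-free abelian group all of whose
finite-rank pure subgroups are Butler groups. -/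
def IsFinitelyButler (B : Type*) [AddCommGroup B] : Prop :=
  NoZeroSMulDivisors ℤ B ∧
    ∀ H : AddSubgroup B, H.IsPure → Module.rank ℤ ↥H < Cardinal.aleph0 → IsButler ↥H


section Helpers

variable {A : Type*} [AddCommGroup A]

lemma noZeroSMulDivisors_of_injective {B : Type*} [AddCommGroup B] (f : B →+ A)
    (hf : Function.Injective f) [NoZeroSMulDivisors ℤ A] : NoZeroSMulDivisors ℤ B := by
  constructor
  intro c x h
  have : f (c • x) = f 0 := by rw [h]
  rw [map_zsmul, map_zero] at this
  rcases smul_eq_zero.mp this with h1 | h2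
  · exact Or.inl h1
  · exact Or.inr (hf (by rw [h2, map_zero]))

lemma nsmul_right_injective_of_tf [NoZeroSMulDivisors ℤ A] {n : ℕ} (hn : n ≠ 0) :
    Function.Injective fun x : A => n • x := by
  intro x y h
  have h' : (n : ℤ) • x = (n : ℤ) • y := by simpa [natCast_zsmul] using h
  exact smul_right_injective A (by exact_mod_cast hn) h'

lemma AddSubgroup.IsPure.mem_of_nsmul_mem [NoZeroSMulDivisors ℤ A] {H : AddSubgroup A}
    (hH : H.IsPure) {n : ℕ} (hn : n ≠ 0) {g : A} (hg : n • g ∈ H) : g ∈ H := by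
  obtain ⟨h', h'H, hh'⟩ := hH n _ hg ⟨g, rfl⟩
  have : h' = g := nsmul_right_injective_of_tf hn hh'
  rwa [← this]

lemma AddSubgroup.isPure_of [NoZeroSMulDivisors ℤ A] {H : AddSubgroup A}
    (h : ∀ (n : ℕ), n ≠ 0 → ∀ g : A, n • g ∈ H → g ∈ H) : H.IsPure := by
  rintro n x hx ⟨g, hg⟩
  rcases eq_or_ne n 0 with rfl | hn
  · refine ⟨0, H.zero_mem, ?_⟩
    simpa using hg
  · exact ⟨g, h n hn g (hg ▸ hx), hg⟩

end Helpers

section Butler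

lemma pi_noZeroSMulDivisors {ι : Type*} {f : ι → Type*} [∀ i, AddCommGroup (f i)]
    [∀ i, NoZeroSMulDivisors ℤ (f i)] : NoZeroSMulDivisors ℤ (∀ i, f i) := by
  constructor
  intro c x h
  by_cases hc : c = 0
  · exact Or.inl hc
  · refine Or.inr (funext fun i => ?_)
    have h' : c • x i = 0 := congrFun h i
    exact (smul_eq_zero.mp h').resolve_left hc

lemma prod_noZeroSMulDivisors {B C : Type*} [AddCommGroup B] [AddCommGroup C]
    [NoZeroSMulDivisors ℤ B] [NoZeroSMulDivisors ℤ C] : NoZeroSMulDivisors ℤ (B × C) := by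
  constructor
  intro c x h
  by_cases hc : c = 0
  · exact Or.inl hc
  · refine Or.inr (Prod.ext ?_ ?_)
    · exact ((smul_eq_zero.mp (congrArg Prod.fst h)).resolve_left hc)
    · exact ((smul_eq_zero.mp (congrArg Prod.snd h)).resolve_left hc)

lemma rankOne_tf {q : AddSubgroup ℚ} : NoZeroSMulDivisors ℤ ↥q :=
  noZeroSMulDivisors_of_injective q.subtype Subtype.val_injective

variable {B C : Type v} [AddCommGroup B] [AddCommGroup C]

lemma IsButler.of_addEquiv (e : B ≃+ C) (hB : IsButler B) : IsButler C := by
  obtain ⟨htf, hrk, k, A, hA, f, hf, hfp⟩ := hB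
  refine ⟨noZeroSMulDivisors_of_injective e.symm.toAddMonoidHom e.symm.injective, ?_, k, A, hA,
    f.comp e.symm.toAddMonoidHom, hf.comp e.symm.injective, ?_⟩
  · rwa [e.toIntLinearEquiv.rank_eq] at hrk
  · have : (f.comp e.symm.toAddMonoidHom).range = f.range := by
      ext x
      constructor
      · rintro ⟨y, rfl⟩; exact ⟨e.symm y, rfl⟩
      · rintro ⟨y, rfl⟩; exact ⟨e y, by simp⟩
    rwa [this]

lemma IsButler.of_pure (hB : IsButler B) (P : AddSubgroup B) (hP : P.IsPure) : IsButler ↥P := by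
  obtain ⟨htf, hrk, k, A, hA, f, hf, hfp⟩ := hB
  haveI : NoZeroSMulDivisors ℤ B := htf
  haveI : NoZeroSMulDivisors ℤ ↥P := noZeroSMulDivisors_of_injective P.subtype Subtype.val_injective
  haveI : ∀ i, NoZeroSMulDivisors ℤ ↥(A i) := fun i => rankOne_tf
  haveI : NoZeroSMulDivisors ℤ (∀ i : Fin k, ↥(A i)) := pi_noZeroSMulDivisors
  refine ⟨inferInstance, lt_of_le_of_lt (P.subtype.toIntLinearMap.rank_le_of_injective
    Subtype.val_injective) hrk, k, A, hA, f.comp P.subtype, hf.comp Subtype.val_injective, ?_⟩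
  apply AddSubgroup.isPure_of
  rintro n hn g hg
  obtain ⟨p, hp⟩ := hg
  -- n • g = f ↑p, with ↑p ∈ P
  have hmem : n • g ∈ f.range := ⟨p, hp⟩
  have hg' : g ∈ f.range := hfp.mem_of_nsmul_mem hn hmem
  obtain ⟨b, rfl⟩ := hg'
  have hb : (p : B) = n • b := hf (hp.trans (map_nsmul f n b).symm)
  have hbP : b ∈ P := hP.mem_of_nsmul_mem hn (hb ▸ p.2)
  exact ⟨⟨b, hbP⟩, rfl⟩

end Butler

section RankHelpers
variable {B C : Type v} [AddCommGroup B] [AddCommGroup C]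

lemma rank_prod_le' : Module.rank ℤ (B × C) ≤ Module.rank ℤ B + Module.rank ℤ C := by
  have h := Submodule.rank_quotient_add_rank (R := ℤ) (LinearMap.ker (LinearMap.snd ℤ B C))
  have e1 : Module.rank ℤ ((B × C) ⧸ LinearMap.ker (LinearMap.snd ℤ B C)) = Module.rank ℤ C :=
    ((LinearMap.snd ℤ B C).quotKerEquivOfSurjective Prod.snd_surjective).rank_eq
  have e2 : Module.rank ℤ ↥(LinearMap.ker (LinearMap.snd ℤ B C)) = Module.rank ℤ B := by
    rw [LinearMap.ker_snd]
    exact ((LinearEquiv.ofInjective (LinearMap.inl ℤ B C) LinearMap.inl_injective).rank_eq).symm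
  rw [e1, e2, add_comm] at h
  exact h.ge

lemma rank_le_of_surjective' {M N : Type v} [AddCommGroup M] [AddCommGroup N]
    (f : M →ₗ[ℤ] N) (hf : Function.Surjective f) : Module.rank ℤ N ≤ Module.rank ℤ M := by
  rw [← (f.quotKerEquivOfSurjective hf).rank_eq]
  exact rank_quotient_le _
end RankHelpers

section PureHelpers
variable {B : Type*} {C : Type*} [AddCommGroup B] [AddCommGroup C]

lemma AddSubgroup.IsPure.prod {H₁ : AddSubgroup B} {H₂ : AddSubgroup C}
    (h₁ : H₁.IsPure) (h₂ : H₂.IsPure) : (H₁.prod H₂).IsPure := by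
  rintro n ⟨x, y⟩ ⟨hx, hy⟩ ⟨⟨g, g'⟩, hg⟩
  obtain ⟨hgx, hgy⟩ := Prod.ext_iff.mp hg
  obtain ⟨a, ha, ha'⟩ := h₁ n x hx ⟨g, hgx⟩
  obtain ⟨b, hb, hb'⟩ := h₂ n y hy ⟨g', hgy⟩
  exact ⟨(a, b), ⟨ha, hb⟩, Prod.ext ha' hb'⟩

lemma AddSubgroup.IsPure.map_equiv {H : AddSubgroup B} (hH : H.IsPure) (e : B ≃+ C) :
    (H.map e.toAddMonoidHom).IsPure := by
  rintro n x hx ⟨g, hg⟩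
  obtain ⟨h, hh, rfl⟩ := hx
  have hsg : n • (e.symm g) = h := by
    apply e.injective
    rw [map_nsmul, e.apply_symm_apply]
    exact hg
  obtain ⟨h', hh', hsm⟩ := hH n h hh ⟨e.symm g, hsg⟩
  exact ⟨e h', ⟨h', hh', rfl⟩, by rw [← map_nsmul]; exact congrArg e hsm⟩

lemma addMonoidHomRange_comp_equiv {D : Type*} [AddCommGroup D] (h : B →+ C) (e : C ≃+ D) :
    (e.toAddMonoidHom.comp h).range = h.range.map e.toAddMonoidHom := by
  ext x
  constructor
  · rintro ⟨y, rfl⟩; exact ⟨h y, ⟨y, rfl⟩, rfl⟩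
  · rintro ⟨y, ⟨z, rfl⟩, rfl⟩; exact ⟨z, rfl⟩

lemma addMonoidHomRange_prodMap {B' C' : Type*} [AddCommGroup B'] [AddCommGroup C']
    (f : B →+ B') (g : C →+ C') : (f.prodMap g).range = f.range.prod g.range := by
  ext ⟨x, y⟩
  constructor
  · rintro ⟨⟨a, b⟩, h⟩
    obtain ⟨h1, h2⟩ := Prod.ext_iff.mp h
    exact ⟨⟨a, h1⟩, ⟨b, h2⟩⟩
  · rintro ⟨⟨a, ha⟩, ⟨b, hb⟩⟩; exact ⟨(a, b), Prod.ext ha hb⟩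
end PureHelpers

section Combine
variable {k l : ℕ} (A : Fin k → AddSubgroup ℚ) (A' : Fin l → AddSubgroup ℚ)

def combinedFam : Fin (k + l) → AddSubgroup ℚ := fun i => Sum.elim A A' (finSumFinEquiv.symm i)

private lemma sumRec_add {ι ι' : Type} {π : ι ⊕ ι' → Type*} [∀ s, AddCommMonoid (π s)]
    (x y : (∀ i, π (Sum.inl i)) × ∀ i', π (Sum.inr i')) (s : ι ⊕ ι') :
    (Sum.rec (x.1 + y.1) (x.2 + y.2) s : π s) = Sum.rec x.1 x.2 s + Sum.rec y.1 y.2 s := by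
  cases s <;> rfl

def combinedEquiv :
    ((∀ a : Fin k, ↥(A a)) × ∀ b : Fin l, ↥(A' b)) ≃+ ∀ i : Fin (k + l), ↥(combinedFam A A' i) where
  toEquiv := (Equiv.sumPiEquivProdPi (fun s => ↥(Sum.elim A A' s))).symm.trans
      (Equiv.piCongrLeft' _ finSumFinEquiv)
  map_add' x y := by
    funext i
    exact sumRec_add (π := fun s => ↥(Sum.elim A A' s)) x y (finSumFinEquiv.symm i)

lemma combinedFam_ne_bot (hA : ∀ i, A i ≠ ⊥) (hA' : ∀ i, A' i ≠ ⊥) :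
    ∀ i, combinedFam A A' i ≠ ⊥ := by
  intro i
  unfold combinedFam
  rcases finSumFinEquiv.symm i with a | b
  · exact hA a
  · exact hA' b
end Combine

lemma IsButler.prod {B C : Type v} [AddCommGroup B] [AddCommGroup C]
    (hB : IsButler B) (hC : IsButler C) : IsButler (B × C) := by
  obtain ⟨tB, rB, k, A, hA, f, hf, hfp⟩ := hB
  obtain ⟨tC, rC, l, A', hA', g, hg, hgp⟩ := hC
  haveI := tB; haveI := tC
  refine ⟨prod_noZeroSMulDivisors, lt_of_le_of_lt rank_prod_le' (Cardinal.add_lt_aleph0 rB rC),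
    k + l, combinedFam A A', combinedFam_ne_bot A A' hA hA',
    (combinedEquiv A A').toAddMonoidHom.comp (f.prodMap g), ?_, ?_⟩
  · refine (combinedEquiv A A').injective.comp ?_
    rw [AddMonoidHom.coe_prodMap]
    exact hf.prodMap hg
  · rw [addMonoidHomRange_comp_equiv, addMonoidHomRange_prodMap]
    exact (hfp.prod hgp).map_equiv _

section Purification
variable {A : Type v} [AddCommGroup A] [NoZeroSMulDivisors ℤ A]

def purification (S : AddSubgroup A) : AddSubgroup A where
  carrier := {a | ∃ n : ℕ, n ≠ 0 ∧ n • a ∈ S}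
  zero_mem' := ⟨1, one_ne_zero, by simpa using S.zero_mem⟩
  add_mem' := by
    rintro a b ⟨n, hn, ha⟩ ⟨m, hm, hb⟩
    refine ⟨n * m, Nat.mul_ne_zero hn hm, ?_⟩
    rw [smul_add]
    have h1 : (n * m) • a = m • (n • a) := by rw [mul_comm, mul_smul]
    have h2 : (n * m) • b = n • (m • b) := mul_smul n m b
    rw [h1, h2]
    exact S.add_mem (S.nsmul_mem ha m) (S.nsmul_mem hb n)
  neg_mem' := by
    rintro a ⟨n, hn, ha⟩
    exact ⟨n, hn, by rw [smul_neg]; exact S.neg_mem ha⟩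

lemma le_purification (S : AddSubgroup A) : S ≤ purification S :=
  fun a ha => ⟨1, one_ne_zero, by simpa using ha⟩

lemma purification_isPure (S : AddSubgroup A) : (purification S).IsPure := by
  apply AddSubgroup.isPure_of
  rintro n hn g ⟨m, hm, hmg⟩
  exact ⟨m * n, Nat.mul_ne_zero hm hn, by rwa [mul_smul]⟩

lemma rank_purification_lt (S : AddSubgroup A) (hS : Module.rank ℤ ↥S < Cardinal.aleph0) :
    Module.rank ℤ ↥(purification S) < Cardinal.aleph0 := by
  set T := purification S with hT
  let U : Submodule ℤ ↥T :=
    { carrier := {x | (x : A) ∈ S}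
      zero_mem' := S.zero_mem
      add_mem' := fun ha hb => S.add_mem ha hb
      smul_mem' := fun c x hx => by
        have : ((c • x : ↥T) : A) = c • (x : A) := rfl
        simpa [this] using S.zsmul_mem hx c }
  have hquot : Module.rank ℤ (↥T ⧸ U) = 0 := by
    rw [rank_eq_zero_iff_isTorsion]
    intro x
    obtain ⟨y, rfl⟩ := Submodule.Quotient.mk_surjective U x
    obtain ⟨n, hn, hny⟩ := y.2
    refine ⟨⟨(n : ℤ), mem_nonZeroDivisors_of_ne_zero (by exact_mod_cast hn)⟩, ?_⟩
    have : ((n : ℤ) • y : ↥T) ∈ U := by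
      show (((n : ℤ) • y : ↥T) : A) ∈ S
      have : (((n : ℤ) • y : ↥T) : A) = (n : ℤ) • (y : A) := rfl
      rw [this, natCast_zsmul]
      exact hny
    rw [Submonoid.smul_def]
    show (n : ℤ) • Submodule.Quotient.mk y = 0
    rw [← Submodule.Quotient.mk_smul, Submodule.Quotient.mk_eq_zero]
    exact this
  have eU : ↥U ≃+ ↥S :=
    { toFun := fun x => ⟨((x : ↥T) : A), x.2⟩
      invFun := fun s => ⟨⟨(s : A), le_purification S s.2⟩, s.2⟩
      left_inv := fun x => rfl
      right_inv := fun s => rfl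
      map_add' := fun x y => rfl }
  have hU : Module.rank ℤ ↥U = Module.rank ℤ ↥S := eU.toIntLinearEquiv.rank_eq
  have h := Submodule.rank_quotient_add_rank (R := ℤ) U
  rw [hquot, hU, zero_add] at h
  rw [← h]
  exact hS

end Purification

section FinButler

lemma rank_addSubgroupMap_le {A B : Type v} [AddCommGroup A] [AddCommGroup B] (f : A →+ B)
    (P : AddSubgroup A) : Module.rank ℤ ↥(P.map f) ≤ Module.rank ℤ ↥P := by
  refine rank_le_of_surjective'
    (AddMonoidHom.toIntLinearMap (AddMonoidHom.mk'
      (fun x : ↥P => (⟨f x, AddSubgroup.mem_map_of_mem f x.2⟩ : ↥(P.map f)))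
      (fun a b => Subtype.ext (by simp)))) ?_
  rintro ⟨y, hy⟩
  obtain ⟨p, hp, rfl⟩ := hy
  exact ⟨⟨p, hp⟩, rfl⟩

lemma IsFinitelyButler.of_pure {A : Type v} [AddCommGroup A] (hA : IsFinitelyButler A)
    (S : AddSubgroup A) (hS : S.IsPure) : IsFinitelyButler ↥S := by
  obtain ⟨tA, hA2⟩ := hA
  haveI := tA
  haveI tS : NoZeroSMulDivisors ℤ ↥S :=
    noZeroSMulDivisors_of_injective S.subtype Subtype.val_injective
  refine ⟨tS, fun P hP hrk => ?_⟩
  let P' : AddSubgroup A := P.map S.subtype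
  have e : ↥P ≃+ ↥P' := AddSubgroup.equivMapOfInjective P S.subtype Subtype.val_injective
  have hrk' : Module.rank ℤ ↥P' < Cardinal.aleph0 := by
    rw [← e.toIntLinearEquiv.rank_eq]
    exact hrk
  have hP' : P'.IsPure := by
    apply AddSubgroup.isPure_of
    intro n hn a ha
    have haS : n • a ∈ S := by
      obtain ⟨x, hx, hxe⟩ := ha
      rw [← hxe]
      exact x.2
    have haS' : a ∈ S := hS.mem_of_nsmul_mem hn haS
    have hsm : (n • (⟨a, haS'⟩ : ↥S)) ∈ P := by
      obtain ⟨x, hx, hxe⟩ := ha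
      have hx2 : n • (⟨a, haS'⟩ : ↥S) = x := Subtype.ext (by simpa using hxe.symm)
      rw [hx2]
      exact hx
    have hmem : (⟨a, haS'⟩ : ↥S) ∈ P := hP.mem_of_nsmul_mem hn hsm
    exact ⟨⟨a, haS'⟩, hmem, rfl⟩
  exact (hA2 P' hP' hrk').of_addEquiv e.symm

lemma IsFinitelyButler.prod {B C : Type v} [AddCommGroup B] [AddCommGroup C]
    (hB : IsFinitelyButler B) (hC : IsFinitelyButler C) : IsFinitelyButler (B × C) := by
  obtain ⟨tB, hB2⟩ := hB
  obtain ⟨tC, hC2⟩ := hC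
  haveI := tB; haveI := tC
  haveI tP : NoZeroSMulDivisors ℤ (B × C) := prod_noZeroSMulDivisors
  refine ⟨tP, fun P hP hrk => ?_⟩
  let Sb := purification (P.map (AddMonoidHom.fst B C))
  let Sc := purification (P.map (AddMonoidHom.snd B C))
  have hSb : IsButler ↥Sb := hB2 Sb (purification_isPure _)
    (rank_purification_lt _ (lt_of_le_of_lt (rank_addSubgroupMap_le _ _) hrk))
  have hSc : IsButler ↥Sc := hC2 Sc (purification_isPure _)
    (rank_purification_lt _ (lt_of_le_of_lt (rank_addSubgroupMap_le _ _) hrk))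
  have hprod : IsButler (↥Sb × ↥Sc) := hSb.prod hSc
  haveI : NoZeroSMulDivisors ℤ ↥Sb :=
    noZeroSMulDivisors_of_injective Sb.subtype Subtype.val_injective
  haveI : NoZeroSMulDivisors ℤ ↥Sc :=
    noZeroSMulDivisors_of_injective Sc.subtype Subtype.val_injective
  haveI : NoZeroSMulDivisors ℤ (↥Sb × ↥Sc) := prod_noZeroSMulDivisors
  let j : ↥Sb × ↥Sc →+ B × C := (Sb.subtype).prodMap (Sc.subtype)
  have hj : Function.Injective j := by
    have : ⇑j = Prod.map (Sb.subtype) (Sc.subtype) := AddMonoidHom.coe_prodMap _ _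
    rw [this]
    exact Function.Injective.prodMap Subtype.val_injective Subtype.val_injective
  let P' : AddSubgroup (↥Sb × ↥Sc) := P.comap j
  have hle : ∀ x ∈ P, x.1 ∈ Sb ∧ x.2 ∈ Sc := fun x hx =>
    ⟨le_purification _ ⟨x, hx, rfl⟩, le_purification _ ⟨x, hx, rfl⟩⟩
  let q2 : ↥P' →+ ↥P := AddMonoidHom.mk' (fun x => ⟨j x.1, x.2⟩)
    (fun a b => Subtype.ext (by simp))
  have hq2 : Function.Bijective q2 := by
    constructor
    · intro a b hab
      exact Subtype.ext (hj (congrArg Subtype.val hab))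
    · rintro ⟨⟨b, c⟩, hx⟩
      obtain ⟨h1, h2⟩ := hle _ hx
      refine ⟨⟨(⟨b, h1⟩, ⟨c, h2⟩), ?_⟩, rfl⟩
      exact hx
  have e : ↥P' ≃+ ↥P := AddEquiv.ofBijective q2 hq2
  have hP' : P'.IsPure := by
    apply AddSubgroup.isPure_of
    intro n hn x hx
    have : n • (j x) ∈ P := by
      have : j (n • x) = n • (j x) := map_nsmul j n x
      rw [← this]
      exact hx
    exact hP.mem_of_nsmul_mem hn this
  exact (hprod.of_pure P' hP').of_addEquiv e

end FinButler

universe u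

/-- Divisible torsion-free finitely Butler groups are amalgamation bases in the class of
torsion-free finitely Butler groups with pure embeddings. -/
theorem divisible_isAmalgamationBase_finitelyButler
    {G H₁ H₂ : Type u} [AddCommGroup G] [AddCommGroup H₁] [AddCommGroup H₂]
    (hG : IsFinitelyButler G) (hH₁ : IsFinitelyButler H₁) (hH₂ : IsFinitelyButler H₂)
    (hdiv : ∀ g : G, ∀ n : ℕ, 1 ≤ n → ∃ x : G, n • x = g)
    (g₁ : G →+ H₁) (g₂ : G →+ H₂)
    (hg₁ : Function.Injective g₁) (hg₂ : Function.Injective g₂)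
    (hp₁ : g₁.range.IsPure) (hp₂ : g₂.range.IsPure) :
    ∃ (H : Type u) (_ : AddCommGroup H), IsFinitelyButler H ∧
      ∃ (f₁ : H₁ →+ H) (f₂ : H₂ →+ H),
        Function.Injective f₁ ∧ f₁.range.IsPure ∧
        Function.Injective f₂ ∧ f₂.range.IsPure ∧
        f₁.comp g₁ = f₂.comp g₂ := by
  haveI tG : NoZeroSMulDivisors ℤ G := hG.1
  haveI tH1 : NoZeroSMulDivisors ℤ H₁ := hH₁.1
  haveI tH2 : NoZeroSMulDivisors ℤ H₂ := hH₂.1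
  have hdivz : ∀ (g : G) (n : ℤ), n ≠ 0 → ∃ x : G, n • x = g := by
    intro g n hn
    obtain ⟨x, hx⟩ := hdiv g n.natAbs (Nat.one_le_iff_ne_zero.mpr (Int.natAbs_ne_zero.mpr hn))
    rcases Int.natAbs_eq n with h | h
    · refine ⟨x, ?_⟩
      rw [h, natCast_zsmul]
      exact hx
    · refine ⟨-x, ?_⟩
      rw [h]
      rw [neg_smul, smul_neg, neg_neg, natCast_zsmul]
      exact hx
  haveI : DivisibleBy G ℤ :=
    { div := fun g n => if h : n = 0 then 0 else Classical.choose (hdivz g n h)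
      div_zero := fun g => by simp
      div_cancel := fun {n} g hn => by
        show n • (if h : n = 0 then (0 : G) else Classical.choose (hdivz g n h)) = g
        rw [dif_neg hn]
        exact Classical.choose_spec (hdivz g n hn) }
  obtain ⟨r, hr⟩ := Module.Baer.extension_property_addMonoidHom
    (Module.Baer.of_divisible G) g₂ hg₂ (AddMonoidHom.id G)
  have hrg : ∀ x : G, r (g₂ x) = x := fun x => congrArg (fun f => f x) hr
  -- the pure subgroup `S = ker r` of `H₂`
  let S : AddSubgroup H₂ := r.ker
  have hSpure : S.IsPure := by
    apply AddSubgroup.isPure_of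
    intro n hn h hh
    have : n • r h = 0 := by
      rw [← map_nsmul]
      exact hh
    have : r h = 0 := by
      rcases smul_eq_zero.mp (by rwa [← natCast_zsmul] at this) with h1 | h2
      · exact absurd (by exact_mod_cast h1) hn
      · exact h2
    exact this
  haveI tS : NoZeroSMulDivisors ℤ ↥S :=
    noZeroSMulDivisors_of_injective S.subtype Subtype.val_injective
  haveI tH : NoZeroSMulDivisors ℤ (H₁ × ↥S) := prod_noZeroSMulDivisors
  -- the amalgam
  refine ⟨H₁ × ↥S, inferInstance, hH₁.prod (hH₂.of_pure S hSpure), ?_⟩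
  have hmem : ∀ h : H₂, h - g₂ (r h) ∈ S := by
    intro h
    show r (h - g₂ (r h)) = 0
    rw [map_sub, hrg, sub_self]
  let f₁ : H₁ →+ H₁ × ↥S := AddMonoidHom.inl H₁ ↥S
  let f₂ : H₂ →+ H₁ × ↥S := AddMonoidHom.mk'
    (fun h => (g₁ (r h), ⟨h - g₂ (r h), hmem h⟩))
    (by
      intro a b
      have hc1 : g₁ (r (a + b)) = g₁ (r a) + g₁ (r b) := by
        rw [map_add, map_add]
      have hc2 : (⟨(a + b) - g₂ (r (a + b)), hmem _⟩ : ↥S) =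
          ⟨a - g₂ (r a), hmem a⟩ + ⟨b - g₂ (r b), hmem b⟩ := by
        refine Subtype.ext ?_
        show (a + b) - g₂ (r (a + b)) = (a - g₂ (r a)) + (b - g₂ (r b))
        rw [map_add, map_add]
        abel
      exact Prod.ext hc1 hc2)
  refine ⟨f₁, f₂, ?_, ?_, ?_, ?_, ?_⟩
  · intro a b hab
    exact congrArg Prod.fst hab
  · -- purity of range of f₁
    apply AddSubgroup.isPure_of
    rintro n hn ⟨a, s⟩ ⟨x, hx⟩
    have hs : n • s = 0 := by
      have := congrArg Prod.snd hx
      exact this.symm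
    have hz : s = 0 := by
      rcases smul_eq_zero.mp (by rwa [← natCast_zsmul] at hs) with h1 | h2
      · exact absurd (by exact_mod_cast h1) hn
      · exact h2
    refine ⟨a, ?_⟩
    rw [hz]
    rfl
  · -- injectivity of f₂
    intro a b hab
    obtain ⟨h1, h2⟩ := Prod.ext_iff.mp hab
    have h2' : a - g₂ (r a) = b - g₂ (r b) := congrArg Subtype.val h2
    have h1' : r a = r b := hg₁ h1
    rw [h1'] at h2'
    exact sub_left_inj.mp h2'
  · -- purity of range of f₂
    apply AddSubgroup.isPure_of
    rintro n hn x ⟨h, hh⟩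
    have h2 : h - g₂ (r h) = n • (x.2 : H₂) := by
      have h2' := congrArg (fun p : H₁ × ↥S => ((p.2 : H₂))) hh
      exact h2'
    obtain ⟨y, hy⟩ := hdiv (r h) n (Nat.one_le_iff_ne_zero.mpr hn)
    have hhn : h = n • ((x.2 : H₂) + g₂ y) := by
      rw [smul_add, ← h2, ← map_nsmul, hy]
      abel
    have hfx : n • x = n • f₂ ((x.2 : H₂) + g₂ y) := by
      rw [← map_nsmul, ← hhn, hh]
    exact ⟨(x.2 : H₂) + g₂ y, (nsmul_right_injective_of_tf hn hfx).symm⟩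
  · -- compatibility
    ext x
    · show g₁ x = g₁ (r (g₂ x))
      rw [hrg]
    · show (0 : H₂) = g₂ x - g₂ (r (g₂ x))
      rw [hrg, sub_self]
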